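/- Let G be a finite connected P6-free graph, v a vertex of G, D an efficient dominating set of G with v ∈ D, b* ∈ N_2(v), and q* ∈ D ∩ N_3(v) the unique vertex of D adjacent to b* (i.e., D ∩ N[b*] = {q*}). Let Q_1 be the connected component of the induced subgraph G[N_3(v) ∪ N_4(v)] containing q*, and set Z = N[q*] ∩ Q_1, W = (N(b*) ∩ Q_1) \ Z, and Y = Q_1 \ (Z ∪ W). Then there is no edge of G between Z and Y, i.e., Z has a co-join to Y. -/

import Mathlib

open SimpleGraph

/-- The `i`-th distance level of a vertex `v`: the set of vertices at distance exactly `i`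
from `v` in `G`. -/
def distLevel {V : Type*} (G : SimpleGraph V) (v : V) (i : ℕ) : Set V :=
  {u : V | G.dist v u = i}

/-- A graph is `P₆`-free if it contains no induced subgraph isomorphic to the chordless
path on 6 vertices. -/
def P6Free {V : Type*} (G : SimpleGraph V) : Prop :=
  ¬ ∃ f : Fin 6 ↪ V, ∀ i j : Fin 6,
      G.Adj (f i) (f j) ↔ ((i : ℕ) + 1 = (j : ℕ) ∨ (j : ℕ) + 1 = (i : ℕ))

/-- `D` is an efficient dominating set of `G`: every vertex is dominated by exactly one
vertex of `D` (a vertex dominates itself and its neighbors). -/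
def IsEDS {V : Type*} (G : SimpleGraph V) (D : Set V) : Prop :=
  ∀ u : V, ∃! d : V, d ∈ D ∧ (d = u ∨ G.Adj d u)

/-- `Q` is (the vertex set of) a connected component of the subgraph of `G` induced by `S`:
`Q` is a nonempty subset of `S`, `Q` induces a connected graph, and `Q` is closed under
adjacency within `S`. -/
def IsCompOf {V : Type*} (G : SimpleGraph V) (S Q : Set V) : Prop :=
  Q ⊆ S ∧ Q.Nonempty ∧ (G.induce Q).Connected ∧
    ∀ x ∈ Q, ∀ y ∈ S, G.Adj x y → y ∈ Q

set_option maxHeartbeats 1000000 in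
lemma mkP6 {V : Type*} (G : SimpleGraph V) (hP6 : P6Free G)
    (x0 x1 x2 x3 x4 x5 : V)
    (e01 : G.Adj x0 x1) (e12 : G.Adj x1 x2) (e23 : G.Adj x2 x3)
    (e34 : G.Adj x3 x4) (e45 : G.Adj x4 x5)
    (n02 : ¬ G.Adj x0 x2) (n03 : ¬ G.Adj x0 x3) (n04 : ¬ G.Adj x0 x4)
    (n05 : ¬ G.Adj x0 x5) (n13 : ¬ G.Adj x1 x3) (n14 : ¬ G.Adj x1 x4)
    (n15 : ¬ G.Adj x1 x5) (n24 : ¬ G.Adj x2 x4) (n25 : ¬ G.Adj x2 x5)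
    (n35 : ¬ G.Adj x3 x5)
    (d02 : x0 ≠ x2) (d03 : x0 ≠ x3) (d04 : x0 ≠ x4) (d05 : x0 ≠ x5)
    (d13 : x1 ≠ x3) (d14 : x1 ≠ x4) (d15 : x1 ≠ x5)
    (d24 : x2 ≠ x4) (d25 : x2 ≠ x5) (d35 : x3 ≠ x5) : False := by
  have e10 := e01.symm; have e21 := e12.symm; have e32 := e23.symm
  have e43 := e34.symm; have e54 := e45.symm
  have n20 : ¬ G.Adj x2 x0 := fun h => n02 h.symm
  have n30 : ¬ G.Adj x3 x0 := fun h => n03 h.symm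
  have n40 : ¬ G.Adj x4 x0 := fun h => n04 h.symm
  have n50 : ¬ G.Adj x5 x0 := fun h => n05 h.symm
  have n31 : ¬ G.Adj x3 x1 := fun h => n13 h.symm
  have n41 : ¬ G.Adj x4 x1 := fun h => n14 h.symm
  have n51 : ¬ G.Adj x5 x1 := fun h => n15 h.symm
  have n42 : ¬ G.Adj x4 x2 := fun h => n24 h.symm
  have n52 : ¬ G.Adj x5 x2 := fun h => n25 h.symm
  have n53 : ¬ G.Adj x5 x3 := fun h => n35 h.symm
  have d01 := e01.ne; have d12 := e12.ne; have d23 := e23.ne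
  have d34 := e34.ne; have d45 := e45.ne
  have d20 := d02.symm; have d30 := d03.symm; have d40 := d04.symm
  have d50 := d05.symm; have d31 := d13.symm; have d41 := d14.symm
  have d51 := d15.symm; have d42 := d24.symm; have d52 := d25.symm
  have d53 := d35.symm
  have d10 := d01.symm; have d21 := d12.symm; have d32 := d23.symm
  have d43 := d34.symm; have d54 := d45.symm
  have hirr : ∀ x : V, ¬ G.Adj x x := fun x => G.loopless.irrefl x
  have m0 : (![x0,x1,x2,x3,x4,x5] : Fin 6 → V) 0 = x0 := rfl
  have m1 : (![x0,x1,x2,x3,x4,x5] : Fin 6 → V) 1 = x1 := rfl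
  have m2 : (![x0,x1,x2,x3,x4,x5] : Fin 6 → V) 2 = x2 := rfl
  have m3 : (![x0,x1,x2,x3,x4,x5] : Fin 6 → V) 3 = x3 := rfl
  have m4 : (![x0,x1,x2,x3,x4,x5] : Fin 6 → V) 4 = x4 := rfl
  have m5 : (![x0,x1,x2,x3,x4,x5] : Fin 6 → V) 5 = x5 := rfl
  apply hP6
  refine ⟨⟨![x0,x1,x2,x3,x4,x5], ?_⟩, ?_⟩
  · intro i j h
    fin_cases i <;> fin_cases j <;>
      simp only [m0, m1, m2, m3, m4, m5] at h <;>
      first | rfl | exact absurd h (by assumption)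
  · intro i j
    fin_cases i <;> fin_cases j <;>
      simp only [m0, m1, m2, m3, m4, m5] <;>
      first
        | exact iff_of_true (by assumption) (by decide)
        | exact iff_of_false (hirr _) (by decide)
        | exact iff_of_false (by assumption) (by decide)

/-- Setup as before, with `G` additionally `P₆`-free, and
`Y = Q₁ \ (Z ∪ W)`. Then there is no edge between `Z` and `Y`. -/
theorem stmt_11 {V : Type*} [Fintype V] (G : SimpleGraph V) (hconn : G.Connected)
    (hP6 : P6Free G) (D : Set V) (hD : IsEDS G D) (v : V) (hv : v ∈ D)
    (bstar : V) (hb : bstar ∈ distLevel G v 2)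
    (qstar : V) (hq : qstar ∈ D ∩ distLevel G v 3)
    (huniq : D ∩ insert bstar (G.neighborSet bstar) = {qstar})
    (Q₁ : Set V) (hQ₁ : IsCompOf G (distLevel G v 3 ∪ distLevel G v 4) Q₁)
    (hqQ : qstar ∈ Q₁)
    (Z W Y : Set V)
    (hZ : Z = insert qstar (G.neighborSet qstar) ∩ Q₁)
    (hW : W = (G.neighborSet bstar ∩ Q₁) \ Z)
    (hY : Y = Q₁ \ (Z ∪ W)) :
    ∀ z ∈ Z, ∀ y ∈ Y, ¬ G.Adj z y := by
  subst hZ hW hY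
  intro z hz y hy hadj
  obtain ⟨hzN, hzQ⟩ := hz
  obtain ⟨hyQ, hyZW⟩ := hy
  have hdb : G.dist v bstar = 2 := hb
  have hdq : G.dist v qstar = 3 := hq.2
  -- basic distance tools
  have adj_dist : ∀ x w : V, G.Adj x w → G.dist x w ≤ 1 := by
    intro x w h
    simpa using SimpleGraph.dist_le h.toWalk
  have tri : ∀ x w : V, G.Adj x w → G.dist v w ≤ G.dist v x + 1 := by
    intro x w h
    exact (hconn.dist_triangle).trans (Nat.add_le_add_left (adj_dist x w h) _)
  have hQdist : ∀ x ∈ Q₁, 3 ≤ G.dist v x := by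
    intro x hx
    rcases hQ₁.1 hx with h | h
    · have h' : G.dist v x = 3 := h; omega
    · have h' : G.dist v x = 4 := h; omega
  -- y is not in N[qstar] and not in N(bstar)
  have hyZ : y ∉ insert qstar (G.neighborSet qstar) ∩ Q₁ := fun h => hyZW (Or.inl h)
  have hyNq : y ∉ insert qstar (G.neighborSet qstar) := fun h => hyZ ⟨h, hyQ⟩
  have hyq : y ≠ qstar := fun h => hyNq (by simp [h])
  have hyAq : ¬ G.Adj qstar y := fun h => hyNq (Set.mem_insert_iff.mpr (Or.inr h))
  have hyAb : ¬ G.Adj bstar y := by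
    intro h
    exact hyZW (Or.inr ⟨⟨h, hyQ⟩, hyZ⟩)
  -- z is a neighbor of qstar
  have hzq : z ≠ qstar := by
    intro h
    exact hyAq (h ▸ hadj)
  have hzA : G.Adj qstar z := by
    rcases Set.mem_insert_iff.mp hzN with h | h
    · exact absurd h hzq
    · exact h
  -- bstar adjacent to qstar
  have hqmem : qstar ∈ D ∩ insert bstar (G.neighborSet bstar) := by
    rw [huniq]; rfl
  have hqb : qstar ≠ bstar := by
    intro h
    rw [h, hdb] at hdq; omega
  have hbq : G.Adj bstar qstar := by
    rcases Set.mem_insert_iff.mp hqmem.2 with h | h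
    · exact absurd h hqb
    · exact h
  -- uniqueness consequences
  have hu_v : ∀ d, d ∈ D ∧ (d = v ∨ G.Adj d v) → d = v :=
    fun d hd => (hD v).unique hd ⟨hv, Or.inl rfl⟩
  have hu_z : ∀ d, d ∈ D ∧ (d = z ∨ G.Adj d z) → d = qstar :=
    fun d hd => (hD z).unique hd ⟨hq.1, Or.inr hzA⟩
  have hu_b : ∀ d, d ∈ D → (d = bstar ∨ G.Adj d bstar) → d = qstar := by
    intro d hd hc
    have : d ∈ D ∩ insert bstar (G.neighborSet bstar) := by
      refine ⟨hd, ?_⟩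
      rcases hc with h | h
      · exact Set.mem_insert_iff.mpr (Or.inl h)
      · exact Set.mem_insert_iff.mpr (Or.inr h.symm)
    rw [huniq] at this
    exact this
  -- get a : midpoint of shortest v-bstar path
  obtain ⟨p, hp⟩ := hconn.exists_walk_length_eq_dist v bstar
  rw [hdb] at hp
  rcases p with _ | ⟨hva, q⟩
  · simp at hp
  · rcases q with _ | ⟨hab, q2⟩
    · simp at hp
    · rename_i a w
      have hq2 : q2.length = 0 := by simpa using hp
      have hw : w = bstar := (SimpleGraph.Walk.eq_of_length_eq_zero hq2)
      rw [hw] at hab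
      -- now: hva : G.Adj v a, hab : G.Adj a bstar
      have hda1 : G.dist v a ≤ 1 := by simpa using SimpleGraph.dist_le hva.toWalk
      have hu_a : ∀ d, d ∈ D ∧ (d = a ∨ G.Adj d a) → d = v :=
        fun d hd => (hD a).unique hd ⟨hv, Or.inr hva⟩
      -- far facts
      have hfar : ∀ x : V, 3 ≤ G.dist v x →
          ¬ G.Adj v x ∧ ¬ G.Adj a x ∧ x ≠ v ∧ x ≠ a ∧ x ≠ bstar := by
        intro x hx
        refine ⟨?_, ?_, ?_, ?_, ?_⟩
        · intro h; have := adj_dist v x h; omega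
        · intro h; have := tri a x h; omega
        · intro h; rw [h, SimpleGraph.dist_self] at hx; omega
        · intro h; rw [h] at hx; omega
        · intro h; rw [h, hdb] at hx; omega
      obtain ⟨hvz, haz, hzv, hza, hzb⟩ := hfar z (hQdist z hzQ)
      obtain ⟨hvy, hay, hyv, hya, hyb⟩ := hfar y (hQdist y hyQ)
      have hvb : ¬ G.Adj v bstar := by
        intro h; have := adj_dist v bstar h; omega
      have hvq : ¬ G.Adj v qstar := by
        intro h; have := adj_dist v qstar h; omega
      have haq : ¬ G.Adj a qstar := by
        intro h; have := tri a qstar h; omega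
      have hvb' : v ≠ bstar := by
        intro h; rw [← h, SimpleGraph.dist_self] at hdb; omega
      have hvq' : v ≠ qstar := by
        intro h; rw [← h, SimpleGraph.dist_self] at hdq; omega
      have haq' : a ≠ qstar := by
        intro h; rw [h] at hda1; omega
      have hbq' : bstar ≠ qstar := fun h => hqb h.symm
      by_cases hbz : G.Adj bstar z
      · -- P6 : v a bstar z y d  where d dominates y
        obtain ⟨d, ⟨hdD, hdy⟩, -⟩ := hD y
        have hdy' : G.Adj d y := by
          rcases hdy with h | h
          · exfalso
            subst h
            exact hyq (hu_z d ⟨hdD, Or.inr hadj.symm⟩)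
          · exact h
        have hdnq : d ≠ qstar := fun h => hyAq (h ▸ hdy')
        have hdnv : d ≠ v := fun h => hvy (h ▸ hdy')
        have hnvd : ¬ G.Adj v d := fun h => hdnv (hu_v d ⟨hdD, Or.inr h.symm⟩)
        have hnad : ¬ G.Adj a d := fun h => hdnv (hu_a d ⟨hdD, Or.inr h.symm⟩)
        have hdna : d ≠ a := fun h => hay (h ▸ hdy')
        have hnbd : ¬ G.Adj bstar d := fun h => hdnq (hu_b d hdD (Or.inr h.symm))
        have hdnb : d ≠ bstar := fun h => hyAb (h ▸ hdy')
        have hnzd : ¬ G.Adj z d := fun h => hdnq (hu_z d ⟨hdD, Or.inr h.symm⟩)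
        have hdnz : d ≠ z := fun h => hdnq (hu_z d ⟨hdD, Or.inl h⟩)
        exact mkP6 G hP6 v a bstar z y d hva hab hbz hadj hdy'.symm
          hvb hvz hvy hnvd haz hay hnad hyAb hnbd hnzd
          hvb' hzv.symm hyv.symm hdnv.symm hza.symm hya.symm hdna.symm
          hyb.symm hdnb.symm hdnz.symm
      · -- P6 : v a bstar qstar z y
        exact mkP6 G hP6 v a bstar qstar z y hva hab hbq hzA hadj
          hvb hvq hvz hvy haq haz hay hbz hyAb hyAq
          hvb' hvq' hzv.symm hyv.symm haq' hza.symm hya.symm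
          hzb.symm hyb.symm hyq.symm
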